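/- Let d, L, M ∈ ℕ, let W_0, W_1, …, W_L be d × d unitary matrices, let H_1, …, H_L be diagonal d × d matrices with integer diagonal entries, and let j_1, …, j_L ∈ {1,…,M}. Define U(x) = W_L · e^{i x_{j_L} H_L} · W_{L−1} ⋯ W_1 · e^{i x_{j_1} H_1} · W_0 for x ∈ ℝ^M. Then for every Hermitian d × d matrix O there exist K ∈ ℕ and coefficients c_k ∈ ℂ for k ∈ {−K,…,K}^M such that for all x ∈ ℝ^M, ⟨e_0, U(x)† O U(x) e_0⟩ = Σ_{k ∈ {−K,…,K}^M} c_k · e^{i (k₁x₁ + ⋯ + k_M x_M)}; i.e., the expectation value function is an exact finite multivariate Fourier series. Consequently, an expectation value sampling model using such an integer-spectrum reuploading circuit with input uniform on [0,2π)^M outputs a random variable with an exact finite polynomial chaos expansion in the orthonormal family { x ↦ e^{i⟨k,x⟩} : k ∈ ℤ^M }. -/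

import Mathlib

open Matrix

/-- The integer-spectrum data-reuploading circuit
`U(x) = W_L e^{i x_{j_L} H_L} W_{L-1} ⋯ W_1 e^{i x_{j_1} H_1} W_0`,
where the diagonal integer matrix `H_l` is given by its diagonal `H l : Fin d → ℤ`. -/
noncomputable def intSpecCircuit (d L M : ℕ) (W : ℕ → Matrix (Fin d) (Fin d) ℂ)
    (H : ℕ → Fin d → ℤ) (j : ℕ → Fin M) (x : Fin M → ℝ) : Matrix (Fin d) (Fin d) ℂ :=
  W L * ((List.range L).reverse.map fun l =>
    Matrix.diagonal (fun t => Complex.exp (Complex.I * (x (j (l + 1)) : ℂ) * ((H (l + 1) t : ℤ) : ℂ)))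
      * W l).prod

noncomputable def Efun (M : ℕ) (k : Fin M → ℤ) (x : Fin M → ℝ) : ℂ :=
  Complex.exp (Complex.I * ∑ i, (k i : ℂ) * (x i : ℂ))

noncomputable def fbox (M K : ℕ) : Finset (Fin M → ℤ) :=
  Finset.Icc (fun _ => -(K:ℤ)) (fun _ => (K:ℤ))

def IsF (M K : ℕ) (f : (Fin M → ℝ) → ℂ) : Prop :=
  ∃ c : (Fin M → ℤ) → ℂ, ∀ x, f x = ∑ k ∈ fbox M K, c k * Efun M k x

lemma mem_fbox {M K : ℕ} {k : Fin M → ℤ} :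
    k ∈ fbox M K ↔ ∀ i, -(K:ℤ) ≤ k i ∧ k i ≤ K := by
  simp [fbox, Finset.mem_Icc, Pi.le_def, forall_and]

lemma IsF.mono {M K K' : ℕ} (h : K ≤ K') {f} (hf : IsF M K f) : IsF M K' f := by
  classical
  obtain ⟨c, hc⟩ := hf
  have hsub : fbox M K ⊆ fbox M K' := by
    intro k hk
    rw [mem_fbox] at hk ⊢
    intro i; have := hk i; omega
  refine ⟨fun k => if k ∈ fbox M K then c k else 0, fun x => ?_⟩
  have key : ∑ k ∈ fbox M K', (if k ∈ fbox M K then c k else 0) * Efun M k x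
      = ∑ k ∈ fbox M K, c k * Efun M k x := by
    rw [← Finset.sum_subset hsub (fun k _ hk => by rw [if_neg hk, zero_mul])]
    exact Finset.sum_congr rfl fun k hk => by rw [if_pos hk]
  rw [hc x]
  exact key.symm

lemma IsF_const {M K : ℕ} (a : ℂ) : IsF M K (fun _ => a) := by
  classical
  refine ⟨fun k => if k = 0 then a else 0, fun x => ?_⟩
  have h0 : (0 : Fin M → ℤ) ∈ fbox M K := by
    rw [mem_fbox]; intro i; simp
  rw [Finset.sum_eq_single (0 : Fin M → ℤ)]
  · dsimp only
    rw [if_pos rfl]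
    simp [Efun]
  · intro k _ hne; dsimp only; rw [if_neg hne, zero_mul]
  · intro h; exact absurd h0 h

lemma IsF.add {M K : ℕ} {f g} (hf : IsF M K f) (hg : IsF M K g) :
    IsF M K (fun x => f x + g x) := by
  obtain ⟨c, hc⟩ := hf
  obtain ⟨e, he⟩ := hg
  refine ⟨c + e, fun x => ?_⟩
  simp [hc x, he x, ← Finset.sum_add_distrib, add_mul]

lemma IsF.finsum {M K : ℕ} {ι : Type*} (s : Finset ι) {f : ι → (Fin M → ℝ) → ℂ}
    (h : ∀ i ∈ s, IsF M K (f i)) : IsF M K (fun x => ∑ i ∈ s, f i x) := by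
  classical
  induction s using Finset.induction with
  | empty => simpa using IsF_const (M := M) (K := K) 0
  | insert a s hx ih =>
    simp only [Finset.sum_insert hx]
    exact (h a (Finset.mem_insert_self a s)).add
      (ih fun i hi => h i (Finset.mem_insert_of_mem hi))

lemma Efun_add {M : ℕ} (k l : Fin M → ℤ) (x : Fin M → ℝ) :
    Efun M k x * Efun M l x = Efun M (k + l) x := by
  rw [Efun, Efun, Efun, ← Complex.exp_add, ← mul_add]
  congr 2
  rw [← Finset.sum_add_distrib]
  refine Finset.sum_congr rfl fun i _ => ?_
  simp only [Pi.add_apply]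
  push_cast
  ring

lemma IsF.mul {M K₁ K₂ : ℕ} {f g} (hf : IsF M K₁ f) (hg : IsF M K₂ g) :
    IsF M (K₁ + K₂) (fun x => f x * g x) := by
  classical
  obtain ⟨c, hc⟩ := hf
  obtain ⟨e, he⟩ := hg
  refine ⟨fun m => ∑ p ∈ (fbox M K₁ ×ˢ fbox M K₂).filter (fun p => p.1 + p.2 = m),
    c p.1 * e p.2, fun x => ?_⟩
  have hmaps : ∀ p ∈ fbox M K₁ ×ˢ fbox M K₂, p.1 + p.2 ∈ fbox M (K₁ + K₂) := by
    intro p hp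
    rw [Finset.mem_product, mem_fbox, mem_fbox] at hp
    rw [mem_fbox]
    intro i
    have h1 := hp.1 i
    have h2 := hp.2 i
    simp only [Pi.add_apply]
    push_cast
    omega
  calc f x * g x = ∑ p ∈ fbox M K₁ ×ˢ fbox M K₂, (c p.1 * e p.2) * Efun M (p.1 + p.2) x := by
        rw [hc x, he x, Finset.sum_mul_sum, ← Finset.sum_product']
        refine Finset.sum_congr rfl fun p _ => ?_
        rw [← Efun_add]; ring
    _ = ∑ m ∈ fbox M (K₁ + K₂), ∑ p ∈ (fbox M K₁ ×ˢ fbox M K₂).filter (fun p => p.1 + p.2 = m),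
          (c p.1 * e p.2) * Efun M (p.1 + p.2) x := by
        rw [Finset.sum_fiberwise_of_maps_to hmaps]
    _ = _ := by
        refine Finset.sum_congr rfl fun m _ => ?_
        rw [Finset.sum_mul]
        refine Finset.sum_congr rfl fun p hp => ?_
        rw [Finset.mem_filter] at hp
        rw [hp.2]

lemma Efun_conj {M : ℕ} (k : Fin M → ℤ) (x : Fin M → ℝ) :
    (starRingEnd ℂ) (Efun M k x) = Efun M (-k) x := by
  rw [Efun, Efun, ← Complex.exp_conj]
  congr 1
  simp only [_root_.map_mul, map_sum, Complex.conj_I, map_intCast, Complex.conj_ofReal]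
  simp only [Pi.neg_apply, Int.cast_neg, neg_mul, Finset.sum_neg_distrib, mul_neg]

lemma IsF.conj {M K : ℕ} {f} (hf : IsF M K f) :
    IsF M K (fun x => (starRingEnd ℂ) (f x)) := by
  obtain ⟨c, hc⟩ := hf
  refine ⟨fun k => (starRingEnd ℂ) (c (-k)), fun x => ?_⟩
  show (starRingEnd ℂ) (f x) = ∑ k ∈ fbox M K, (starRingEnd ℂ) (c (-k)) * Efun M k x
  rw [hc x, map_sum]
  refine Finset.sum_nbij' (fun k => -k) (fun k => -k) ?_ ?_ ?_ ?_ ?_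
  · intro k hk; rw [mem_fbox] at hk ⊢; intro i; have := hk i; simp only [Pi.neg_apply]; omega
  · intro k hk; rw [mem_fbox] at hk ⊢; intro i; have := hk i; simp only [Pi.neg_apply]; omega
  · intro k _; simp
  · intro k _; simp
  · intro k _
    rw [_root_.map_mul, Efun_conj, neg_neg]

lemma IsF_exp {M : ℕ} (jj : Fin M) (n : ℤ) :
    IsF M n.natAbs (fun x => Complex.exp (Complex.I * (x jj : ℂ) * (n : ℂ))) := by
  classical
  set k₀ : Fin M → ℤ := fun i => if i = jj then n else 0 with hk₀
  have hmem : k₀ ∈ fbox M n.natAbs := by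
    rw [mem_fbox]; intro i
    simp only [hk₀]
    split <;> omega
  refine ⟨fun k => if k = k₀ then 1 else 0, fun x => ?_⟩
  rw [Finset.sum_eq_single k₀]
  · dsimp only
    rw [if_pos rfl, one_mul, Efun]
    congr 1
    have key : ∀ i, ((k₀ i : ℤ) : ℂ) * (x i : ℂ) = if i = jj then (n : ℂ) * x i else 0 := by
      intro i; simp only [hk₀]; split <;> simp
    rw [Finset.sum_congr rfl fun i _ => key i, Finset.sum_ite_eq' Finset.univ jj,
      if_pos (Finset.mem_univ jj)]
    ring
  · intro k _ hne; dsimp only; rw [if_neg hne, zero_mul]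
  · intro h; exact absurd hmem h

lemma intSpecCircuit_zero (d M : ℕ) (W : ℕ → Matrix (Fin d) (Fin d) ℂ)
    (H : ℕ → Fin d → ℤ) (j : ℕ → Fin M) (x : Fin M → ℝ) :
    intSpecCircuit d 0 M W H j x = W 0 := by
  simp [intSpecCircuit]

lemma intSpecCircuit_succ (d L M : ℕ) (W : ℕ → Matrix (Fin d) (Fin d) ℂ)
    (H : ℕ → Fin d → ℤ) (j : ℕ → Fin M) (x : Fin M → ℝ) :
    intSpecCircuit d (L + 1) M W H j x
      = W (L + 1) * (Matrix.diagonal (fun t =>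
          Complex.exp (Complex.I * (x (j (L + 1)) : ℂ) * ((H (L + 1) t : ℤ) : ℂ)))
        * intSpecCircuit d L M W H j x) := by
  simp [intSpecCircuit, List.range_succ, Matrix.mul_assoc]

lemma circuit_isF (d L M : ℕ) (W : ℕ → Matrix (Fin d) (Fin d) ℂ)
    (H : ℕ → Fin d → ℤ) (j : ℕ → Fin M) :
    ∃ K, ∀ a b, IsF M K (fun x => intSpecCircuit d L M W H j x a b) := by
  classical
  induction L with
  | zero =>
    refine ⟨0, fun a b => ?_⟩
    simp only [intSpecCircuit_zero]
    exact IsF_const _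
  | succ L ih =>
    obtain ⟨K, hK⟩ := ih
    set N : ℕ := Finset.univ.sup (fun t : Fin d => (H (L + 1) t).natAbs) with hN
    refine ⟨N + K, fun a b => ?_⟩
    have key : ∀ x, intSpecCircuit d (L + 1) M W H j x a b
        = ∑ t, W (L + 1) a t *
            (Complex.exp (Complex.I * (x (j (L + 1)) : ℂ) * ((H (L + 1) t : ℤ) : ℂ))
              * intSpecCircuit d L M W H j x t b) := by
      intro x
      rw [intSpecCircuit_succ, Matrix.mul_apply]
      refine Finset.sum_congr rfl fun t _ => ?_
      rw [Matrix.diagonal_mul]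
    have : IsF M (N + K) (fun x => ∑ t, W (L + 1) a t *
        (Complex.exp (Complex.I * (x (j (L + 1)) : ℂ) * ((H (L + 1) t : ℤ) : ℂ))
          * intSpecCircuit d L M W H j x t b)) := by
      refine IsF.finsum Finset.univ fun t _ => ?_
      have h1 : IsF M ((H (L + 1) t).natAbs + K)
          (fun x => Complex.exp (Complex.I * (x (j (L + 1)) : ℂ) * ((H (L + 1) t : ℤ) : ℂ))
            * intSpecCircuit d L M W H j x t b) :=
        (IsF_exp (j (L + 1)) (H (L + 1) t)).mul (hK t b)
      have h2 : IsF M (0 + ((H (L + 1) t).natAbs + K)) _ := (IsF_const (W (L + 1) a t)).mul h1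
      refine h2.mono ?_
      have : (H (L + 1) t).natAbs ≤ N :=
        Finset.le_sup (f := fun t => (H (L + 1) t).natAbs) (Finset.mem_univ t)
      omega
    obtain ⟨c, hc⟩ := this
    exact ⟨c, fun x => (key x).trans (hc x)⟩

/-- For any unitaries `W_0, …, W_L`, integer diagonal matrices `H_1, …, H_L`
and indices `j_1, …, j_L ∈ {1, …, M}`, and any Hermitian observable `O`, the expectation value
`⟨e₀, U(x)† O U(x) e₀⟩` of the integer-spectrum reuploading circuit is an exact finite
multivariate Fourier series: there are `K` and coefficients `c_k`, `k ∈ {-K, …, K}^M`, with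
`⟨e₀, U(x)† O U(x) e₀⟩ = Σ_k c_k e^{i(k₁x₁ + ⋯ + k_M x_M)}` for all `x ∈ ℝ^M`. -/
theorem stmt_18 (d L M : ℕ) (hd : 0 < d)
    (W : ℕ → Matrix (Fin d) (Fin d) ℂ) (hW : ∀ l ≤ L, W l ∈ Matrix.unitaryGroup (Fin d) ℂ)
    (H : ℕ → Fin d → ℤ) (j : ℕ → Fin M)
    (O : Matrix (Fin d) (Fin d) ℂ) (hO : O.IsHermitian) :
    ∃ (K : ℕ) (c : (Fin M → ℤ) → ℂ), ∀ x : Fin M → ℝ,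
      ((intSpecCircuit d L M W H j x)ᴴ * O * intSpecCircuit d L M W H j x) ⟨0, hd⟩ ⟨0, hd⟩ =
        ∑ k ∈ Finset.Icc (fun _ : Fin M => -(K : ℤ)) (fun _ : Fin M => (K : ℤ)),
          c k * Complex.exp (Complex.I * ∑ i, (k i : ℂ) * (x i : ℂ)) := by
  classical
  obtain ⟨K, hK⟩ := circuit_isF d L M W H j
  set z : Fin d := ⟨0, hd⟩
  have key : ∀ x, ((intSpecCircuit d L M W H j x)ᴴ * O * intSpecCircuit d L M W H j x) z z
      = ∑ s, ∑ t, (starRingEnd ℂ) (intSpecCircuit d L M W H j x s z) * O s t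
          * intSpecCircuit d L M W H j x t z := by
    intro x
    rw [Matrix.mul_apply, Finset.sum_comm]
    refine Finset.sum_congr rfl fun t _ => ?_
    rw [Matrix.mul_apply, Finset.sum_mul]
    refine Finset.sum_congr rfl fun s _ => ?_
    rw [Matrix.conjTranspose_apply]
    rfl
  have hIsF : IsF M (K + K) (fun x => ∑ s, ∑ t,
      (starRingEnd ℂ) (intSpecCircuit d L M W H j x s z) * O s t
        * intSpecCircuit d L M W H j x t z) := by
    refine IsF.finsum Finset.univ fun s _ => ?_
    refine IsF.finsum Finset.univ fun t _ => ?_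
    have h1 : IsF M (K + 0) (fun x =>
        (starRingEnd ℂ) (intSpecCircuit d L M W H j x s z) * O s t) :=
      ((hK s z).conj).mul (IsF_const (O s t))
    have h2 : IsF M ((K + 0) + K) _ := h1.mul (hK t z)
    exact h2.mono (by omega)
  obtain ⟨c, hc⟩ := hIsF
  exact ⟨K + K, c, fun x => (key x).trans ((hc x).trans (by rw [fbox]; rfl))⟩
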